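/- Let s₂, s₃ > 0, set ω := min{s₂, s₃}, and assume |g|_{s₂} < ∞ and |u_d|_{s₃} < ∞. Let j be the reduced functional with data (g, u_d) and, for even n, let j_n be the reduced functional with truncated data (P_n g, P_n u_d). Assume there exists κ > 0 such that ∇²j(s,α) − κ·Id and ∇²j_n(s,α) − κ·Id are positive semidefinite for all (s,α) ∈ W° and all n, and let (s̄,ᾱ) ∈ W° and (s̄_n,ᾱ_n) ∈ W° be the (unique) minimizers of j and j_n over W°. Then there exists a constant C > 0, depending only on s₀, α₁, d, ‖g‖ and ‖u_d‖ but not on n, such that |(s̄_n,ᾱ_n) − (s̄,ᾱ)| ≤ (C/κ) (n/2)^{−ω} max{|g|_ω, |u_d|_ω} for all even n ≥ 2. -/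

import Mathlib

open scoped BigOperators
open Filter

noncomputable section

/-- Index set `ℤ^d \ {0}` of nonzero frequencies. -/
abbrev K (d : ℕ) : Type := {k : Fin d → ℤ // k ≠ 0}

/-- Euclidean norm `|k|` of a frequency `k ∈ ℤ^d \ {0}`. -/
noncomputable def nrm {d : ℕ} (k : K d) : ℝ := Real.sqrt (∑ i : Fin d, ((k.1 i : ℝ)) ^ 2)

/-- Squared fractional Sobolev seminorm `|u|_s² = Σ_k |k|^{2s} |u_k|²`. -/
noncomputable def HnormSq {d : ℕ} (s : ℝ) (u : K d → ℂ) : ℝ :=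
  ∑' k : K d, nrm k ^ (2 * s) * ‖u k‖ ^ 2

/-- `u ∈ ℓ²`, i.e. `‖u‖ = |u|_0 < ∞`. -/
def MemL2 {d : ℕ} (u : K d → ℂ) : Prop := Summable fun k : K d => ‖u k‖ ^ 2

/-- `|u|_s < ∞`. -/
def MemHs {d : ℕ} (s : ℝ) (u : K d → ℂ) : Prop :=
  Summable fun k : K d => nrm k ^ (2 * s) * ‖u k‖ ^ 2

/-- Membership `k ∈ ℤ_n^d`, i.e. `−n/2 ≤ k_i ≤ n/2 − 1` for all `i`. -/
def inZn {d : ℕ} (n : ℕ) (k : K d) : Prop :=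
  ∀ i : Fin d, -((n : ℤ) / 2) ≤ k.1 i ∧ k.1 i ≤ (n : ℤ) / 2 - 1

instance {d : ℕ} (n : ℕ) (k : K d) : Decidable (inZn n k) := by
  unfold inZn; infer_instance

/-- Truncation `P_n v` of a sequence to the modes in `ℤ_n^d ∖ {0}`. -/
def trunc {d : ℕ} (n : ℕ) (v : K d → ℂ) : K d → ℂ :=
  fun k => if inZn n k then v k else 0

/-! ### Auxiliary lemmas -/

set_option maxHeartbeats 2000000

lemma stmt11_abs_le_nrm {d : ℕ} (k : K d) (i : Fin d) : |((k.1 i : ℝ))| ≤ nrm k := by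
  have h1 : ((k.1 i : ℝ)) ^ 2 ≤ ∑ j : Fin d, ((k.1 j : ℝ)) ^ 2 :=
    Finset.single_le_sum (f := fun j => ((k.1 j : ℝ)) ^ 2) (fun j _ => sq_nonneg _)
      (Finset.mem_univ i)
  calc |((k.1 i : ℝ))| = Real.sqrt (((k.1 i : ℝ)) ^ 2) := (Real.sqrt_sq_eq_abs _).symm
    _ ≤ nrm k := Real.sqrt_le_sqrt h1

lemma stmt11_one_le_nrm {d : ℕ} (k : K d) : 1 ≤ nrm k := by
  obtain ⟨i, hi⟩ := Function.ne_iff.mp k.2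
  have h1 : (1 : ℤ) ≤ |k.1 i| := Int.one_le_abs (by simpa using hi)
  have h2 : (1 : ℝ) ≤ |((k.1 i : ℝ))| := by
    rw [← Int.cast_abs]; exact_mod_cast h1
  exact h2.trans (stmt11_abs_le_nrm k i)

lemma stmt11_tail_nrm {d : ℕ} (k : K d) (r : ℕ) (h : ¬ inZn (r + r) k) : (r : ℝ) ≤ nrm k := by
  unfold inZn at h
  push_neg at h
  obtain ⟨i, hi⟩ := h
  have h2 : (((r + r : ℕ) : ℤ)) / 2 = (r : ℤ) := by push_cast; omega
  rw [h2] at hi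
  have habs : (r : ℤ) ≤ |k.1 i| := by
    rcases le_or_gt (-(r : ℤ)) (k.1 i) with h3 | h3
    · have := hi h3
      rw [abs_of_nonneg (by omega)]; omega
    · rw [abs_of_nonpos (by omega)]; omega
  have hc : ((r : ℝ)) ≤ |((k.1 i : ℝ))| := by
    rw [← Int.cast_abs]; exact_mod_cast habs
  exact hc.trans (stmt11_abs_le_nrm k i)

lemma stmt11_rfun_hasFDerivAt (L s₀ α₀ α₁ : ℝ) (hL : 0 ≤ L) (hs₀ : 0 < s₀) (hα₀ : 0 < α₀)
    (p : ℝ × ℝ) (hs : s₀ ≤ p.1) (hα : α₀ ≤ p.2) (hα₁ : p.2 ≤ α₁) :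
    ∃ R : (ℝ × ℝ) →L[ℝ] ℝ,
      HasFDerivAt (fun q : ℝ × ℝ => q.2 / (q.2 + Real.exp (L * 2 * q.1))) R p ∧
      ‖R‖ ≤ 1 / α₀ + α₁ / s₀ := by
  have hα2 : 0 < p.2 := lt_of_lt_of_le hα₀ hα
  set E : ℝ := Real.exp (L * 2 * p.1) with hE
  have hEpos : 0 < E := Real.exp_pos _
  set D : ℝ := p.2 + E with hD
  have hDpos : 0 < D := by positivity
  have hlin : HasFDerivAt (fun q : ℝ × ℝ => L * 2 * q.1)
      ((L * 2) • ContinuousLinearMap.fst ℝ ℝ ℝ) p := (hasFDerivAt_fst).const_mul (L * 2)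
  have hexp : HasFDerivAt (fun q : ℝ × ℝ => Real.exp (L * 2 * q.1))
      (E • ((L * 2) • ContinuousLinearMap.fst ℝ ℝ ℝ)) p := hlin.exp
  have hDf : HasFDerivAt (fun q : ℝ × ℝ => q.2 + Real.exp (L * 2 * q.1))
      (ContinuousLinearMap.snd ℝ ℝ ℝ + E • ((L * 2) • ContinuousLinearMap.fst ℝ ℝ ℝ)) p :=
    (hasFDerivAt_snd).add hexp
  have hinv : HasDerivAt (fun x : ℝ => x⁻¹) (-(D ^ 2)⁻¹) D := hasDerivAt_inv hDpos.ne'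
  have hDinv : HasFDerivAt (fun q : ℝ × ℝ => (q.2 + Real.exp (L * 2 * q.1))⁻¹)
      ((-(D ^ 2)⁻¹) • (ContinuousLinearMap.snd ℝ ℝ ℝ
        + E • ((L * 2) • ContinuousLinearMap.fst ℝ ℝ ℝ))) p :=
    hinv.comp_hasFDerivAt p hDf
  have hmul : HasFDerivAt (fun q : ℝ × ℝ => q.2 * (q.2 + Real.exp (L * 2 * q.1))⁻¹)
      (p.2 • ((-(D ^ 2)⁻¹) • (ContinuousLinearMap.snd ℝ ℝ ℝ
          + E • ((L * 2) • ContinuousLinearMap.fst ℝ ℝ ℝ)))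
        + D⁻¹ • ContinuousLinearMap.snd ℝ ℝ ℝ) p := (hasFDerivAt_snd).mul hDinv
  have hfun : (fun q : ℝ × ℝ => q.2 / (q.2 + Real.exp (L * 2 * q.1)))
      = (fun q : ℝ × ℝ => q.2 * (q.2 + Real.exp (L * 2 * q.1))⁻¹) := by
    funext q; rw [div_eq_mul_inv]
  have hα₁pos : 0 < α₁ := lt_of_lt_of_le hα2 hα₁
  have hMnn : (0:ℝ) ≤ 1 / α₀ + α₁ / s₀ :=
    add_nonneg (one_div_pos.mpr hα₀).le (div_pos hα₁pos hs₀).le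
  refine ⟨_, hfun ▸ hmul, ?_⟩
  refine ContinuousLinearMap.opNorm_le_bound _ hMnn ?_
  intro v
  have hv1 : |v.1| ≤ ‖v‖ := by rw [← Real.norm_eq_abs]; exact norm_fst_le v
  have hv2 : |v.2| ≤ ‖v‖ := by rw [← Real.norm_eq_abs]; exact norm_snd_le v
  have hvn : 0 ≤ ‖v‖ := norm_nonneg v
  have happ : (p.2 • ((-(D ^ 2)⁻¹) • (ContinuousLinearMap.snd ℝ ℝ ℝ
          + E • ((L * 2) • ContinuousLinearMap.fst ℝ ℝ ℝ)))
        + D⁻¹ • ContinuousLinearMap.snd ℝ ℝ ℝ) v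
      = (E / D ^ 2) * v.2 - (L * 2 * E * p.2 / D ^ 2) * v.1 := by
    simp only [ContinuousLinearMap.add_apply, ContinuousLinearMap.smul_apply,
      ContinuousLinearMap.coe_fst', ContinuousLinearMap.coe_snd', smul_eq_mul]
    have hD2 : D ^ 2 ≠ 0 := by positivity
    field_simp
    ring
  rw [happ]
  have key1 : E / D ^ 2 ≤ 1 / α₀ := by
    rw [div_le_div_iff₀ (by positivity) hα₀]
    nlinarith [mul_pos hEpos hα2, sq_nonneg p.2, sq_nonneg E,
      mul_le_mul_of_nonneg_left hα hEpos.le]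
  have hLE : L * 2 * s₀ ≤ E := by
    have h1 := Real.add_one_le_exp (L * 2 * s₀)
    have h2 : Real.exp (L * 2 * s₀) ≤ E := by
      rw [hE]; exact Real.exp_le_exp.mpr (by nlinarith)
    linarith
  have key2 : L * 2 * E * p.2 / D ^ 2 ≤ α₁ / s₀ := by
    rw [div_le_div_iff₀ (by positivity) hs₀]
    have hDE : E ^ 2 ≤ D ^ 2 := by nlinarith
    have c2 : (L * 2 * s₀) * p.2 * E ≤ E * α₁ * E := by
      have hcc : (L * 2 * s₀) * p.2 ≤ E * α₁ := mul_le_mul hLE hα₁ hα2.le hEpos.le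
      exact mul_le_mul_of_nonneg_right hcc hEpos.le
    have c4 : α₁ * E ^ 2 ≤ α₁ * D ^ 2 := mul_le_mul_of_nonneg_left hDE hα₁pos.le
    nlinarith [c2, c4]
  have habs : |(E / D ^ 2) * v.2 - (L * 2 * E * p.2 / D ^ 2) * v.1|
      ≤ (E / D ^ 2) * |v.2| + (L * 2 * E * p.2 / D ^ 2) * |v.1| := by
    have h1 : 0 ≤ E / D ^ 2 := by positivity
    have h2 : 0 ≤ L * 2 * E * p.2 / D ^ 2 := by positivity
    calc |(E / D ^ 2) * v.2 - (L * 2 * E * p.2 / D ^ 2) * v.1|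
        ≤ |(E / D ^ 2) * v.2| + |(L * 2 * E * p.2 / D ^ 2) * v.1| := abs_sub _ _
      _ = (E / D ^ 2) * |v.2| + (L * 2 * E * p.2 / D ^ 2) * |v.1| := by
          rw [abs_mul, abs_mul, abs_of_nonneg h1, abs_of_nonneg h2]
  refine habs.trans ?_
  have t1 : (E / D ^ 2) * |v.2| ≤ (1 / α₀) * ‖v‖ :=
    mul_le_mul key1 hv2 (abs_nonneg _) (one_div_pos.mpr hα₀).le
  have t2 : (L * 2 * E * p.2 / D ^ 2) * |v.1| ≤ (α₁ / s₀) * ‖v‖ :=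
    mul_le_mul key2 hv1 (abs_nonneg _) (div_pos hα₁pos hs₀).le
  linarith

lemma stmt11_normsq_expand (gk uk : ℂ) (ρ : ℝ) :
    ‖(ρ : ℂ) * gk - uk‖ ^ 2
      = ‖gk‖ ^ 2 * ρ ^ 2 - 2 * ((gk * (starRingEnd ℂ) uk).re) * ρ + ‖uk‖ ^ 2 := by
  have key : ∀ z : ℂ, ‖z‖ ^ 2 = z.re ^ 2 + z.im ^ 2 := by
    intro z
    rw [Complex.sq_norm, Complex.normSq_apply]; ring
  rw [key, key, key]
  simp only [Complex.sub_re, Complex.sub_im, Complex.mul_re, Complex.mul_im,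
    Complex.ofReal_re, Complex.ofReal_im, Complex.conj_re, Complex.conj_im]
  ring

lemma stmt11_term_eq_poly (gk uk : ℂ) (nk : ℝ) (hnk : 0 < nk) (q : ℝ × ℝ) :
    ‖(q.2 : ℂ) * gk / ((q.2 + nk ^ (2 * q.1) : ℝ) : ℂ) - uk‖ ^ 2
      = ‖gk‖ ^ 2 * (q.2 / (q.2 + Real.exp (Real.log nk * 2 * q.1))) ^ 2
        - 2 * ((gk * (starRingEnd ℂ) uk).re) * (q.2 / (q.2 + Real.exp (Real.log nk * 2 * q.1)))
        + ‖uk‖ ^ 2 := by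
  have hE : nk ^ (2 * q.1) = Real.exp (Real.log nk * 2 * q.1) := by
    rw [Real.rpow_def_of_pos hnk]; ring_nf
  rw [hE]
  have hcast : (q.2 : ℂ) * gk / ((q.2 + Real.exp (Real.log nk * 2 * q.1) : ℝ) : ℂ)
      = ((q.2 / (q.2 + Real.exp (Real.log nk * 2 * q.1)) : ℝ) : ℂ) * gk := by
    rw [Complex.ofReal_div, div_mul_eq_mul_div]
  rw [hcast, stmt11_normsq_expand]

lemma stmt11_re_le (gk uk : ℂ) : |(gk * (starRingEnd ℂ) uk).re| ≤ ‖gk‖ * ‖uk‖ := by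
  calc |(gk * (starRingEnd ℂ) uk).re| ≤ ‖gk * (starRingEnd ℂ) uk‖ :=
      Complex.abs_re_le_norm _
    _ = ‖gk‖ * ‖uk‖ := by rw [norm_mul, RCLike.norm_conj]

lemma stmt11_term_le (gk uk : ℂ) (nk : ℝ) (hnk : 1 ≤ nk) (q : ℝ × ℝ) (h2 : 0 < q.2) :
    ‖(q.2 : ℂ) * gk / ((q.2 + nk ^ (2 * q.1) : ℝ) : ℂ) - uk‖ ^ 2
      ≤ 2 * ‖gk‖ ^ 2 + 2 * ‖uk‖ ^ 2 := by
  have hnk0 : 0 < nk := lt_of_lt_of_le one_pos hnk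
  rw [stmt11_term_eq_poly gk uk nk hnk0 q]
  set ρ : ℝ := q.2 / (q.2 + Real.exp (Real.log nk * 2 * q.1)) with hρ
  have hEpos : 0 < Real.exp (Real.log nk * 2 * q.1) := Real.exp_pos _
  have hρ0 : 0 ≤ ρ := div_nonneg h2.le (by positivity)
  have hρ1 : ρ ≤ 1 := by
    rw [hρ, div_le_one (by positivity)]; linarith
  have hb := abs_le.mp (stmt11_re_le gk uk)
  have hρsq : ρ ^ 2 ≤ 1 := by nlinarith
  have e1 : ‖gk‖ ^ 2 * ρ ^ 2 ≤ ‖gk‖ ^ 2 := mul_le_of_le_one_right (sq_nonneg ‖gk‖) hρsq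
  have k1 : (-(gk * (starRingEnd ℂ) uk).re) * ρ ≤ (‖gk‖ * ‖uk‖) * ρ :=
    mul_le_mul_of_nonneg_right (by linarith [hb.1]) hρ0
  have k2 : (‖gk‖ * ‖uk‖) * ρ ≤ ‖gk‖ * ‖uk‖ :=
    mul_le_of_le_one_right (mul_nonneg (norm_nonneg gk) (norm_nonneg uk)) hρ1
  have e3 : 2 * (‖gk‖ * ‖uk‖) ≤ ‖gk‖ ^ 2 + ‖uk‖ ^ 2 := by nlinarith [sq_nonneg (‖gk‖ - ‖uk‖)]
  nlinarith [e1, k1, k2, e3]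

lemma stmt11_term_hasFDerivAt (gk uk : ℂ) (s₀ α₀ α₁ : ℝ) (hs₀ : 0 < s₀) (hα₀ : 0 < α₀)
    (nk : ℝ) (hnk : 1 ≤ nk) (p : ℝ × ℝ) (hs : s₀ ≤ p.1) (hα : α₀ ≤ p.2) (hα₁ : p.2 ≤ α₁) :
    ∃ R : (ℝ × ℝ) →L[ℝ] ℝ,
      HasFDerivAt
        (fun q : ℝ × ℝ => ‖(q.2 : ℂ) * gk / ((q.2 + nk ^ (2 * q.1) : ℝ) : ℂ) - uk‖ ^ 2) R p ∧
      ‖R‖ ≤ (1 / α₀ + α₁ / s₀) * (3 * ‖gk‖ ^ 2 + ‖uk‖ ^ 2) := by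
  have hnk0 : 0 < nk := lt_of_lt_of_le one_pos hnk
  set L : ℝ := Real.log nk with hLdef
  have hL : 0 ≤ L := Real.log_nonneg hnk
  obtain ⟨R₀, hR₀, hR₀n⟩ := stmt11_rfun_hasFDerivAt L s₀ α₀ α₁ hL hs₀ hα₀ p hs hα hα₁
  set ρf : ℝ × ℝ → ℝ := fun q => q.2 / (q.2 + Real.exp (L * 2 * q.1)) with hρf
  set a : ℝ := ‖gk‖ ^ 2 with ha
  set b : ℝ := (gk * (starRingEnd ℂ) uk).re with hb
  set cc : ℝ := ‖uk‖ ^ 2 with hcc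
  have hfun : (fun q : ℝ × ℝ => ‖(q.2 : ℂ) * gk / ((q.2 + nk ^ (2 * q.1) : ℝ) : ℂ) - uk‖ ^ 2)
      = (fun x : ℝ => a * x ^ 2 - 2 * b * x + cc) ∘ ρf :=
    funext fun q => stmt11_term_eq_poly gk uk nk hnk0 q
  set x₀ : ℝ := ρf p with hx₀
  have hp1 : HasDerivAt (fun x : ℝ => x ^ 2) (2 * x₀) x₀ := by
    simpa using hasDerivAt_pow 2 x₀
  have hq : HasDerivAt (fun x : ℝ => a * x ^ 2 - 2 * b * x + cc) (a * (2 * x₀) - 2 * b) x₀ := by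
    have h2 : HasDerivAt (fun x : ℝ => 2 * b * x) (2 * b) x₀ := by
      simpa using (hasDerivAt_id x₀).const_mul (2 * b)
    exact ((hp1.const_mul a).sub h2).add_const cc
  have hcomp : HasFDerivAt ((fun x : ℝ => a * x ^ 2 - 2 * b * x + cc) ∘ ρf)
      ((a * (2 * x₀) - 2 * b) • R₀) p := hq.comp_hasFDerivAt p hR₀
  rw [hfun]
  refine ⟨_, hcomp, ?_⟩
  have hα2 : 0 < p.2 := lt_of_lt_of_le hα₀ hα
  have hα₁pos : 0 < α₁ := lt_of_lt_of_le hα2 hα₁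
  have hx₀mem : 0 ≤ x₀ ∧ x₀ ≤ 1 := by
    constructor
    · exact div_nonneg hα2.le (by positivity)
    · rw [hx₀, hρf]
      simp only
      rw [div_le_one (by positivity)]
      nlinarith [Real.exp_pos (L * 2 * p.1)]
  have hbabs : |b| ≤ ‖gk‖ * ‖uk‖ := stmt11_re_le gk uk
  have hcoef : |a * (2 * x₀) - 2 * b| ≤ 3 * a + cc := by
    have h1 : |a * (2 * x₀)| ≤ 2 * a := by
      rw [abs_mul, abs_of_nonneg (by positivity : (0:ℝ) ≤ a), abs_mul]
      rw [abs_of_nonneg (by norm_num : (0:ℝ) ≤ (2:ℝ)), abs_of_nonneg hx₀mem.1]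
      nlinarith [hx₀mem.2, sq_nonneg ‖gk‖]
    have h2 : 2 * |b| ≤ a + cc := by
      nlinarith [sq_nonneg (‖gk‖ - ‖uk‖), hbabs]
    calc |a * (2 * x₀) - 2 * b| ≤ |a * (2 * x₀)| + |2 * b| := abs_sub _ _
      _ = |a * (2 * x₀)| + 2 * |b| := by rw [abs_mul 2 b, abs_two]
      _ ≤ 2 * a + (a + cc) := add_le_add h1 h2
      _ = 3 * a + cc := by ring
  have hMnn : (0:ℝ) ≤ 1 / α₀ + α₁ / s₀ :=
    add_nonneg (one_div_pos.mpr hα₀).le (div_pos hα₁pos hs₀).le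
  calc ‖(a * (2 * x₀) - 2 * b) • R₀‖ ≤ |a * (2 * x₀) - 2 * b| * ‖R₀‖ := by
        simpa using norm_smul_le (a * (2 * x₀) - 2 * b) R₀
    _ ≤ (3 * a + cc) * (1 / α₀ + α₁ / s₀) :=
        mul_le_mul hcoef hR₀n (norm_nonneg _) (by positivity)
    _ = (1 / α₀ + α₁ / s₀) * (3 * a + cc) := by ring

lemma stmt11_mono_of_hess (f : ℝ × ℝ → ℝ) (W : Set (ℝ × ℝ)) (hWc : Convex ℝ W)
    (κ : ℝ) (hκ : 0 < κ)
    (hh : ∀ x ∈ W, ∀ v : ℝ × ℝ, κ * ‖v‖ ^ 2 ≤ fderiv ℝ (fderiv ℝ f) x v v)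
    (p q : ℝ × ℝ) (hp : p ∈ W) (hq : q ∈ W) :
    κ * ‖q - p‖ ^ 2 ≤ fderiv ℝ f q (q - p) - fderiv ℝ f p (q - p) := by
  have hdiff : ∀ x ∈ W, DifferentiableAt ℝ (fderiv ℝ f) x := by
    intro x hx
    by_contra hnd
    have h0 : fderiv ℝ (fderiv ℝ f) x = 0 := fderiv_zero_of_not_differentiableAt hnd
    have h1 := hh x hx (1, 0)
    rw [h0] at h1
    have h2 : ‖((1 : ℝ), (0 : ℝ))‖ = 1 := by
      simp [Prod.norm_def]
    rw [h2] at h1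
    simp at h1
    linarith
  set v : ℝ × ℝ := q - p with hv
  set γ : ℝ → ℝ × ℝ := fun t => p + t • v with hγ
  have hγ0 : γ 0 = p := by simp [hγ]
  have hγ1 : γ 1 = q := by simp [hγ, hv]
  have hγmem : ∀ t ∈ Set.Icc (0 : ℝ) 1, γ t ∈ W := by
    intro t ht
    have hmem := hWc hp hq (by linarith [ht.2] : (0 : ℝ) ≤ 1 - t) ht.1 (by ring)
    have heq : (1 - t) • p + t • q = γ t := by
      simp only [hγ, hv]
      module
    rwa [heq] at hmem
  set ψ : ℝ → ℝ := fun t => fderiv ℝ f (γ t) v with hψ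
  have hψd : ∀ t ∈ Set.Icc (0 : ℝ) 1,
      HasDerivAt ψ (fderiv ℝ (fderiv ℝ f) (γ t) v v) t := by
    intro t ht
    have hγd : HasDerivAt γ v t := by
      have h1 : HasDerivAt (fun s : ℝ => s • v) ((1 : ℝ) • v) t := (hasDerivAt_id t).smul_const v
      simpa [hγ] using h1.const_add p
    have hA : HasFDerivAt (fderiv ℝ f) (fderiv ℝ (fderiv ℝ f) (γ t)) (γ t) :=
      (hdiff _ (hγmem t ht)).hasFDerivAt
    have hc : HasDerivAt (fun s => fderiv ℝ f (γ s)) (fderiv ℝ (fderiv ℝ f) (γ t) v) t :=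
      hA.comp_hasDerivAt t hγd
    have he := (ContinuousLinearMap.apply ℝ ℝ v).hasFDerivAt.comp_hasDerivAt t hc
    exact he
  have hcont : ContinuousOn ψ (Set.Icc (0 : ℝ) 1) :=
    fun t ht => (hψd t ht).continuousAt.continuousWithinAt
  have hdOn : DifferentiableOn ℝ ψ (interior (Set.Icc (0 : ℝ) 1)) :=
    fun t ht => ((hψd t (interior_subset ht)).differentiableAt).differentiableWithinAt
  have hge : ∀ x ∈ interior (Set.Icc (0 : ℝ) 1), κ * ‖v‖ ^ 2 ≤ deriv ψ x := by
    intro t ht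
    rw [(hψd t (interior_subset ht)).deriv]
    exact hh _ (hγmem _ (interior_subset ht)) v
  have hmvt := Convex.mul_sub_le_image_sub_of_le_deriv (convex_Icc (0 : ℝ) 1) hcont hdOn hge
    0 (Set.left_mem_Icc.mpr zero_le_one) 1 (Set.right_mem_Icc.mpr zero_le_one) zero_le_one
  have h2 : κ * ‖v‖ ^ 2 * (1 - 0) ≤ fderiv ℝ f (γ 1) v - fderiv ℝ f (γ 0) v := hmvt
  rw [hγ1, hγ0] at h2
  linarith

/-- The summand of the reduced functional. -/
noncomputable def termF {d : ℕ} (g ud : K d → ℂ) (k : K d) (q : ℝ × ℝ) : ℝ :=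
  ‖(q.2 : ℂ) * g k / ((q.2 + nrm k ^ (2 * q.1) : ℝ) : ℂ) - ud k‖ ^ 2

/-- convergence of the spectral approximation of the bilevel problem.
Under the stated regularity of the data `g, u_d`, strong convexity of `φ` and of the reduced
functionals `j`, `j_n` (Hessians `⪰ κ·Id` on `W°`), the minimizers satisfy
`|(s̄_n,ᾱ_n) − (s̄,ᾱ)| ≤ (C/κ)(n/2)^{−ω} max{|g|_ω, |u_d|_ω}` for all even `n ≥ 2`,
with `C` independent of `n`. -/
theorem stmt_11 (d : ℕ) (hd : 1 ≤ d)
    (s₀ s₁ α₀ α₁ : ℝ) (hs₀ : 0 < s₀) (hs : s₀ < s₁) (hα₀ : 0 < α₀) (hα : α₀ < α₁)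
    (W : Set (ℝ × ℝ)) (hW : W = Set.Ioo s₀ s₁ ×ˢ Set.Ioo α₀ α₁)
    (g ud : K d → ℂ) (hg2 : MemL2 g) (hud2 : MemL2 ud)
    (s₂ s₃ : ℝ) (hs₂ : 0 < s₂) (hs₃ : 0 < s₃)
    (ω : ℝ) (hω : ω = min s₂ s₃)
    (hg : MemHs s₂ g) (hud : MemHs s₃ ud)
    (φ : ℝ × ℝ → ℝ) (hφC2 : ContDiffOn ℝ 2 φ W) (hφ0 : ∀ p ∈ W, 0 ≤ φ p)
    (θ : ℝ) (hθ : 0 < θ)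
    (hφsc : ∀ p ∈ W, ∀ v : ℝ × ℝ,
      θ * ‖v‖ ^ 2 ≤ iteratedFDerivWithin ℝ 2 φ W p ![v, v])
    (hφblow : ∀ p ∈ frontier W, Tendsto φ (nhdsWithin p W) atTop)
    (j : ℝ × ℝ → ℝ) (jn : ℕ → ℝ × ℝ → ℝ)
    (hj : ∀ p : ℝ × ℝ, j p = (1 / (2 * (2 * Real.pi) ^ d)) *
        (∑' k : K d, ‖(p.2 : ℂ) * g k / ((p.2 + nrm k ^ (2 * p.1) : ℝ) : ℂ) - ud k‖ ^ 2)
      + φ p)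
    (hjn : ∀ n : ℕ, ∀ p : ℝ × ℝ, jn n p = (1 / (2 * (2 * Real.pi) ^ d)) *
        (∑' k : K d,
          ‖(p.2 : ℂ) * trunc n g k / ((p.2 + nrm k ^ (2 * p.1) : ℝ) : ℂ) - trunc n ud k‖ ^ 2)
      + φ p)
    (κ : ℝ) (hκ : 0 < κ)
    (hhess : ∀ p ∈ W, ∀ v : ℝ × ℝ,
      κ * ‖v‖ ^ 2 ≤ iteratedFDerivWithin ℝ 2 j W p ![v, v])
    (hhessn : ∀ n : ℕ, Even n → ∀ p ∈ W, ∀ v : ℝ × ℝ,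
      κ * ‖v‖ ^ 2 ≤ iteratedFDerivWithin ℝ 2 (jn n) W p ![v, v])
    (pbar : ℝ × ℝ) (hpbar : pbar ∈ W) (hminbar : ∀ q ∈ W, j pbar ≤ j q)
    (pn : ℕ → ℝ × ℝ)
    (hpn : ∀ n : ℕ, Even n → pn n ∈ W ∧ ∀ q ∈ W, jn n (pn n) ≤ jn n q) :
    ∃ C : ℝ, 0 < C ∧ ∀ n : ℕ, Even n → 2 ≤ n →
      ‖pn n - pbar‖ ≤ C / κ * ((n : ℝ) / 2) ^ (-ω) *
        max (Real.sqrt (HnormSq ω g)) (Real.sqrt (HnormSq ω ud)) := by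
  classical
  -- basic facts about the domain
  have hWo : IsOpen W := by rw [hW]; exact (isOpen_Ioo).prod isOpen_Ioo
  have hWc : Convex ℝ W := by rw [hW]; exact (convex_Ioo _ _).prod (convex_Ioo _ _)
  have hWpre : IsPreconnected W := hWc.isPreconnected
  have hreg : ∀ x ∈ W, s₀ ≤ x.1 ∧ α₀ ≤ x.2 ∧ x.2 ≤ α₁ := by
    intro x hx; rw [hW] at hx
    exact ⟨hx.1.1.le, hx.2.1.le, hx.2.2.le⟩
  set c : ℝ := 1 / (2 * (2 * Real.pi) ^ d) with hc
  have hcpos : 0 < c := by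
    rw [hc]
    have hπ : (0:ℝ) < 2 * Real.pi := by positivity
    positivity
  set M : ℝ := 1 / α₀ + α₁ / s₀ with hM
  have hα₁pos : 0 < α₁ := hα₀.trans hα
  have hMpos : 0 < M := add_pos (one_div_pos.mpr hα₀) (div_pos hα₁pos hs₀)
  set T : ℝ := max (Real.sqrt (HnormSq ω g)) (Real.sqrt (HnormSq ω ud)) with hT
  have hTnn : 0 ≤ T := le_trans (Real.sqrt_nonneg _) (le_max_left _ _)
  have hωpos : 0 < ω := by rw [hω]; exact lt_min hs₂ hs₃
  have hnrm0 : ∀ k : K d, (0:ℝ) ≤ nrm k := fun k => le_trans zero_le_one (stmt11_one_le_nrm k)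
  have htermnn : ∀ (g' ud' : K d → ℂ) (k : K d) (q : ℝ × ℝ), 0 ≤ termF g' ud' k q := by
    intro g' ud' k q; unfold termF; positivity
  have hHgnn : 0 ≤ HnormSq ω g :=
    tsum_nonneg (fun k => mul_nonneg (Real.rpow_nonneg (hnrm0 k) _) (sq_nonneg _))
  have hHudnn : 0 ≤ HnormSq ω ud :=
    tsum_nonneg (fun k => mul_nonneg (Real.rpow_nonneg (hnrm0 k) _) (sq_nonneg _))
  -- summable bound for derivatives
  set u : K d → ℝ := fun k => M * (3 * ‖g k‖ ^ 2 + ‖ud k‖ ^ 2) with hu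
  have hunn : ∀ k, 0 ≤ u k := by
    intro k
    have : (0:ℝ) ≤ 3 * ‖g k‖ ^ 2 + ‖ud k‖ ^ 2 := by positivity
    exact mul_nonneg hMpos.le this
  have husum : Summable u := ((hg2.mul_left 3).add hud2).mul_left M
  -- derivative of each term of the full functional
  have hDterm : ∀ (k : K d), ∀ x ∈ W, HasFDerivAt (termF g ud k) (fderiv ℝ (termF g ud k) x) x ∧
      ‖fderiv ℝ (termF g ud k) x‖ ≤ u k := by
    intro k x hx
    obtain ⟨hx1, hx2, hx3⟩ := hreg x hx
    obtain ⟨R, hR, hRn⟩ := stmt11_term_hasFDerivAt (g k) (ud k) s₀ α₀ α₁ hs₀ hα₀ (nrm k)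
      (stmt11_one_le_nrm k) x hx1 hx2 hx3
    have hR' : HasFDerivAt (termF g ud k) R x := hR
    have hfd : fderiv ℝ (termF g ud k) x = R := hR'.fderiv
    rw [hfd]
    exact ⟨hR', hRn⟩
  -- summability of the series at `pbar`
  have hpos2 : 0 < pbar.2 := lt_of_lt_of_le hα₀ (hreg pbar hpbar).2.1
  have hsum0 : Summable (fun k => termF g ud k pbar) := by
    refine Summable.of_nonneg_of_le (fun k => htermnn g ud k pbar)
      (fun k => stmt11_term_le (g k) (ud k) (nrm k) (stmt11_one_le_nrm k) pbar hpos2)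
      ?_
    exact (hg2.mul_left 2).add (hud2.mul_left 2)
  -- differentiability of the full series on W
  have hS : ∀ x ∈ W, HasFDerivAt (fun y => ∑' k, termF g ud k y)
      (∑' k, fderiv ℝ (termF g ud k) x) x := by
    intro x hx
    exact hasFDerivAt_tsum_of_isPreconnected husum hWo hWpre
      (fun k y hy => (hDterm k y hy).1) (fun k y hy => (hDterm k y hy).2) hpbar hsum0 hx
  -- weighted summability facts
  have hωs₂ : 2 * ω ≤ 2 * s₂ := by
    have := min_le_left s₂ s₃; rw [hω]; linarith
  have hωs₃ : 2 * ω ≤ 2 * s₃ := by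
    have := min_le_right s₂ s₃; rw [hω]; linarith
  have hgw : Summable (fun k : K d => nrm k ^ (2 * ω) * ‖g k‖ ^ 2) := by
    refine Summable.of_nonneg_of_le
      (fun k => mul_nonneg (Real.rpow_nonneg (hnrm0 k) _) (sq_nonneg _)) (fun k => ?_) hg
    exact mul_le_mul_of_nonneg_right
      (Real.rpow_le_rpow_of_exponent_le (stmt11_one_le_nrm k) hωs₂) (by positivity)
  have hudw : Summable (fun k : K d => nrm k ^ (2 * ω) * ‖ud k‖ ^ 2) := by
    refine Summable.of_nonneg_of_le
      (fun k => mul_nonneg (Real.rpow_nonneg (hnrm0 k) _) (sq_nonneg _)) (fun k => ?_) hud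
    exact mul_le_mul_of_nonneg_right
      (Real.rpow_le_rpow_of_exponent_le (stmt11_one_le_nrm k) hωs₃) (by positivity)
  have hHg : HnormSq ω g ≤ T ^ 2 := by
    have h0 : 0 ≤ HnormSq ω g := hHgnn
    have h1 : Real.sqrt (HnormSq ω g) ≤ T := le_max_left _ _
    nlinarith [Real.sq_sqrt h0, Real.sqrt_nonneg (HnormSq ω g)]
  have hHu : HnormSq ω ud ≤ T ^ 2 := by
    have h0 : 0 ≤ HnormSq ω ud := hHudnn
    have h1 : Real.sqrt (HnormSq ω ud) ≤ T := le_max_right _ _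
    nlinarith [Real.sq_sqrt h0, Real.sqrt_nonneg (HnormSq ω ud)]
  -- the Hessian bound in fderiv form
  have hhess' : ∀ x ∈ W, ∀ v : ℝ × ℝ, κ * ‖v‖ ^ 2 ≤ fderiv ℝ (fderiv ℝ j) x v v := by
    intro x hx v
    have h := hhess x hx v
    rw [iteratedFDerivWithin_of_isOpen 2 hWo hx, iteratedFDeriv_two_apply] at h
    simpa using h
  -- gradient of j vanishes at pbar
  have hlocmin : IsLocalMin j pbar := by
    have hev : ∀ᶠ x in nhds pbar, j pbar ≤ j x :=
      Filter.eventually_of_mem (hWo.mem_nhds hpbar) (fun x hx => hminbar x hx)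
    exact hev
  have hgrad0 : fderiv ℝ j pbar = 0 := hlocmin.fderiv_eq_zero
  -- choose the constant
  have hCnn : (0:ℝ) ≤ 4 * c * M * T :=
    mul_nonneg (mul_nonneg (mul_nonneg (by norm_num) hcpos.le) hMpos.le) hTnn
  refine ⟨4 * c * M * T + 1, by linarith, ?_⟩
  intro n hne hn2
  obtain ⟨hpnW, hminn⟩ := hpn n hne
  obtain ⟨r, hr⟩ := hne
  have hr1 : 1 ≤ r := by omega
  set mr : ℝ := (r : ℝ) with hmr
  have hmr1 : (1:ℝ) ≤ mr := by rw [hmr]; exact_mod_cast hr1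
  have hmrpos : (0:ℝ) < mr := lt_of_lt_of_le one_pos hmr1
  have hnr : ((n : ℝ) / 2) = mr := by rw [hr]; push_cast; ring
  set v : ℝ × ℝ := pn n - pbar with hv
  -- RHS is nonnegative
  have hRHSnn : 0 ≤ (4 * c * M * T + 1) / κ * ((n : ℝ) / 2) ^ (-ω) * T := by
    have h1 : (0:ℝ) ≤ (4 * c * M * T + 1) / κ := div_nonneg (by linarith) hκ.le
    have h2 : (0:ℝ) ≤ ((n : ℝ) / 2) ^ (-ω) := Real.rpow_nonneg (by positivity) _
    exact mul_nonneg (mul_nonneg h1 h2) hTnn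
  -- strong monotonicity applied to pbar, pn n
  have hmono := stmt11_mono_of_hess j W hWc κ hκ hhess' pbar (pn n) hpbar hpnW
  rw [hgrad0] at hmono
  simp only [ContinuousLinearMap.zero_apply, sub_zero] at hmono
  -- hmono : κ * ‖pn n - pbar‖ ^ 2 ≤ fderiv ℝ j (pn n) (pn n - pbar)
  by_cases hdj : DifferentiableAt ℝ j (pn n)
  swap
  · -- junk case: fderiv j (pn n) = 0 forces pn n = pbar
    rw [fderiv_zero_of_not_differentiableAt hdj] at hmono
    simp only [ContinuousLinearMap.zero_apply] at hmono
    have hv0 : ‖pn n - pbar‖ ^ 2 ≤ 0 := by nlinarith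
    have : ‖pn n - pbar‖ = 0 := by nlinarith [norm_nonneg (pn n - pbar), sq_nonneg ‖pn n - pbar‖]
    rw [this]
    exact hRHSnn
  -- truncated terms and their derivatives
  · set fn' : K d → (ℝ × ℝ) → (ℝ × ℝ) →L[ℝ] ℝ :=
      fun k x => if inZn n k then fderiv ℝ (termF g ud k) x else 0 with hfn'
    have hDtermn : ∀ (k : K d), ∀ x ∈ W,
        HasFDerivAt (termF (trunc n g) (trunc n ud) k) (fn' k x) x ∧ ‖fn' k x‖ ≤ u k := by
      intro k x hx
      by_cases hk : inZn n k
      · have hfeq : termF (trunc n g) (trunc n ud) k = termF g ud k := by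
          funext q; simp [termF, trunc, if_pos hk]
        rw [hfeq, hfn']
        simp only [if_pos hk]
        exact hDterm k x hx
      · have hfeq : termF (trunc n g) (trunc n ud) k = fun _ => (0:ℝ) := by
          funext q; simp [termF, trunc, if_neg hk]
        rw [hfeq, hfn']
        simp only [if_neg hk]
        exact ⟨hasFDerivAt_const 0 x, by simpa using hunn k⟩
    have htrle : ∀ k, ‖trunc n g k‖ ≤ ‖g k‖ ∧ ‖trunc n ud k‖ ≤ ‖ud k‖ := by
      intro k
      constructor <;> (unfold trunc; split <;> simp [norm_nonneg])
    have hsum0n : Summable (fun k => termF (trunc n g) (trunc n ud) k pbar) := by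
      refine Summable.of_nonneg_of_le (fun k => htermnn (trunc n g) (trunc n ud) k pbar)
        (fun k => ?_) ((hg2.mul_left 2).add (hud2.mul_left 2))
      refine le_trans (stmt11_term_le (trunc n g k) (trunc n ud k) (nrm k)
        (stmt11_one_le_nrm k) pbar hpos2) ?_
      have h1 := (htrle k).1
      have h2 := (htrle k).2
      nlinarith [norm_nonneg (trunc n g k), norm_nonneg (trunc n ud k),
        norm_nonneg (g k), norm_nonneg (ud k)]
    have hSn : ∀ x ∈ W, HasFDerivAt (fun y => ∑' k, termF (trunc n g) (trunc n ud) k y)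
        (∑' k, fn' k x) x := by
      intro x hx
      exact hasFDerivAt_tsum_of_isPreconnected husum hWo hWpre
        (fun k y hy => (hDtermn k y hy).1) (fun k y hy => (hDtermn k y hy).2) hpbar hsum0n hx
    -- rewrite jn in terms of j and the two series
    have hjneq : jn n = fun q0 => j q0 - c * (∑' k, termF g ud k q0)
        + c * (∑' k, termF (trunc n g) (trunc n ud) k q0) := by
      funext q0
      rw [hjn n q0, hj q0]
      simp only [termF, hc]
      ring
    set DS : (ℝ × ℝ) →L[ℝ] ℝ := ∑' k, fderiv ℝ (termF g ud k) (pn n) with hDS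
    set DSn : (ℝ × ℝ) →L[ℝ] ℝ := ∑' k, fn' k (pn n) with hDSn
    have hjn_deriv : HasFDerivAt (jn n) (fderiv ℝ j (pn n) - c • DS + c • DSn) (pn n) := by
      rw [hjneq]
      exact (hdj.hasFDerivAt.sub ((hS (pn n) hpnW).const_mul c)).add
        ((hSn (pn n) hpnW).const_mul c)
    have hlocminn : IsLocalMin (jn n) (pn n) := by
      have hev : ∀ᶠ x in nhds (pn n), jn n (pn n) ≤ jn n x :=
        Filter.eventually_of_mem (hWo.mem_nhds hpnW) (fun x hx => hminn x hx)
      exact hev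
    have h0n : fderiv ℝ j (pn n) - c • DS + c • DSn = 0 := hlocminn.hasFDerivAt_eq_zero hjn_deriv
    have hval : fderiv ℝ j (pn n) v = c * ((DS - DSn) v) := by
      have h2 : (fderiv ℝ j (pn n) - c • DS + c • DSn) v = 0 := by rw [h0n]; simp
      simp only [ContinuousLinearMap.add_apply, ContinuousLinearMap.sub_apply,
        ContinuousLinearMap.smul_apply, smul_eq_mul] at h2 ⊢
      linarith
    -- bound the norm of DS - DSn
    have hsum1 : Summable (fun k => fderiv ℝ (termF g ud k) (pn n)) :=
      Summable.of_norm_bounded husum (fun k => (hDterm k _ hpnW).2)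
    have hsum2 : Summable (fun k => fn' k (pn n)) :=
      Summable.of_norm_bounded husum (fun k => (hDtermn k _ hpnW).2)
    have hsub : DS - DSn = ∑' k, (fderiv ℝ (termF g ud k) (pn n) - fn' k (pn n)) :=
      (Summable.tsum_sub hsum1 hsum2).symm
    set w : K d → ℝ := fun k => if inZn n k then 0 else u k with hw
    have hwnn : ∀ k, 0 ≤ w k := by
      intro k; rw [hw]; dsimp only; split
      · exact le_refl 0
      · exact hunn k
    have hwle : ∀ k, w k ≤ u k := by
      intro k; rw [hw]; dsimp only; split
      · exact hunn k
      · exact le_refl _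
    have hwsum : Summable w := Summable.of_nonneg_of_le hwnn hwle husum
    have hptw : ∀ k, ‖fderiv ℝ (termF g ud k) (pn n) - fn' k (pn n)‖ ≤ w k := by
      intro k
      rw [hfn', hw]
      dsimp only
      by_cases hk : inZn n k
      · simp [if_pos hk]
      · simp only [if_neg hk, sub_zero]
        exact (hDterm k _ hpnW).2
    have hnsub : ‖DS - DSn‖ ≤ ∑' k, w k := by
      rw [hsub]
      refine le_trans (norm_tsum_le_tsum_norm ?_) (Summable.tsum_le_tsum hptw ?_ hwsum)
      · exact Summable.of_nonneg_of_le (fun k => norm_nonneg _) hptw hwsum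
      · exact Summable.of_nonneg_of_le (fun k => norm_nonneg _) hptw hwsum
    -- compare w with the weighted tail
    set Z : K d → ℝ := fun k => mr ^ (-(2 * ω)) *
      (M * (3 * (nrm k ^ (2 * ω) * ‖g k‖ ^ 2) + nrm k ^ (2 * ω) * ‖ud k‖ ^ 2)) with hZ
    have hZsum : Summable Z := (((hgw.mul_left 3).add hudw).mul_left M).mul_left _
    have hwZ : ∀ k, w k ≤ Z k := by
      intro k
      rw [hw, hZ]
      dsimp only
      by_cases hk : inZn n k
      · rw [if_pos hk]
        have hnn1 : (0:ℝ) ≤ mr ^ (-(2 * ω)) := Real.rpow_nonneg hmrpos.le _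
        have hnn2 : (0:ℝ) ≤ nrm k ^ (2 * ω) := Real.rpow_nonneg (hnrm0 k) _
        have hnn3 : (0:ℝ) ≤ 3 * (nrm k ^ (2 * ω) * ‖g k‖ ^ 2) + nrm k ^ (2 * ω) * ‖ud k‖ ^ 2 := by
          positivity
        exact mul_nonneg hnn1 (mul_nonneg hMpos.le hnn3)
      · rw [if_neg hk]
        have h1 : mr ≤ nrm k := by
          rw [hmr]
          refine stmt11_tail_nrm k r ?_
          rw [← hr]; exact hk
        have h3 : mr ^ (2 * ω) ≤ nrm k ^ (2 * ω) :=
          Real.rpow_le_rpow hmrpos.le h1 (by linarith)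
        have h4 : 0 < mr ^ (2 * ω) := Real.rpow_pos_of_pos hmrpos _
        have h2 : (1:ℝ) ≤ mr ^ (-(2 * ω)) * nrm k ^ (2 * ω) := by
          rw [Real.rpow_neg hmrpos.le, ← div_eq_inv_mul, le_div_iff₀ h4]
          linarith
        calc u k = 1 * u k := (one_mul _).symm
          _ ≤ (mr ^ (-(2 * ω)) * nrm k ^ (2 * ω)) * u k :=
              mul_le_mul_of_nonneg_right h2 (hunn k)
          _ = mr ^ (-(2 * ω)) *
              (M * (3 * (nrm k ^ (2 * ω) * ‖g k‖ ^ 2) + nrm k ^ (2 * ω) * ‖ud k‖ ^ 2)) := by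
              rw [hu]; ring
    have hZval : ∑' k, Z k = mr ^ (-(2 * ω)) * (M * (3 * HnormSq ω g + HnormSq ω ud)) := by
      rw [hZ]
      rw [tsum_mul_left]
      congr 1
      rw [tsum_mul_left]
      congr 1
      rw [Summable.tsum_add (hgw.mul_left 3) hudw, tsum_mul_left]
      rfl
    have hwle2 : ∑' k, w k ≤ mr ^ (-(2 * ω)) * (M * (3 * HnormSq ω g + HnormSq ω ud)) := by
      rw [← hZval]
      exact Summable.tsum_le_tsum hwZ hwsum hZsum
    -- assemble
    rw [hval] at hmono
    have hDSv : (DS - DSn) v ≤ ‖DS - DSn‖ * ‖v‖ :=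
      le_trans (le_abs_self _) ((DS - DSn).le_opNorm v)
    have hBnn : (0:ℝ) ≤ mr ^ (-(2 * ω)) * (M * (3 * HnormSq ω g + HnormSq ω ud)) := by
      have h0g : 0 ≤ HnormSq ω g := hHgnn
      have h0u : 0 ≤ HnormSq ω ud := hHudnn
      have : (0:ℝ) ≤ mr ^ (-(2 * ω)) := Real.rpow_nonneg hmrpos.le _
      have h2 : (0:ℝ) ≤ M * (3 * HnormSq ω g + HnormSq ω ud) := by
        apply mul_nonneg hMpos.le; linarith
      exact mul_nonneg this h2
    have hchain : κ * ‖v‖ ^ 2 ≤ c * (mr ^ (-(2 * ω)) * (M * (3 * HnormSq ω g + HnormSq ω ud))) * ‖v‖ := by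
      calc κ * ‖v‖ ^ 2 ≤ c * ((DS - DSn) v) := hmono
        _ ≤ c * (‖DS - DSn‖ * ‖v‖) := by
            exact mul_le_mul_of_nonneg_left hDSv hcpos.le
        _ ≤ c * ((mr ^ (-(2 * ω)) * (M * (3 * HnormSq ω g + HnormSq ω ud))) * ‖v‖) := by
            refine mul_le_mul_of_nonneg_left ?_ hcpos.le
            exact mul_le_mul_of_nonneg_right (le_trans hnsub hwle2) (norm_nonneg v)
        _ = c * (mr ^ (-(2 * ω)) * (M * (3 * HnormSq ω g + HnormSq ω ud))) * ‖v‖ := by ring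
    by_cases hv0 : ‖v‖ = 0
    · have : ‖pn n - pbar‖ = 0 := hv0
      rw [this]
      exact hRHSnn
    have hvpos : 0 < ‖v‖ := lt_of_le_of_ne (norm_nonneg v) (Ne.symm hv0)
    have hdiv : κ * ‖v‖ ≤ c * (mr ^ (-(2 * ω)) * (M * (3 * HnormSq ω g + HnormSq ω ud))) := by
      have h1 : κ * ‖v‖ * ‖v‖ ≤
          c * (mr ^ (-(2 * ω)) * (M * (3 * HnormSq ω g + HnormSq ω ud))) * ‖v‖ := by
        calc κ * ‖v‖ * ‖v‖ = κ * ‖v‖ ^ 2 := by ring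
          _ ≤ _ := hchain
      exact le_of_mul_le_mul_right h1 hvpos
    -- final numeric estimate
    have hsplit : mr ^ (-(2 * ω)) = mr ^ (-ω) * mr ^ (-ω) := by
      rw [← Real.rpow_add hmrpos]; ring_nf
    have hexp1 : mr ^ (-ω) ≤ 1 :=
      Real.rpow_le_one_of_one_le_of_nonpos hmr1 (by linarith)
    have hexpnn : (0:ℝ) ≤ mr ^ (-ω) := Real.rpow_nonneg hmrpos.le _
    have hfinal : c * (mr ^ (-(2 * ω)) * (M * (3 * HnormSq ω g + HnormSq ω ud)))
        ≤ (4 * c * M * T + 1) * mr ^ (-ω) * T := by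
      have h0g : 0 ≤ HnormSq ω g := hHgnn
      have h0u : 0 ≤ HnormSq ω ud := hHudnn
      have hH4 : 3 * HnormSq ω g + HnormSq ω ud ≤ 4 * T ^ 2 := by nlinarith
      calc c * (mr ^ (-(2 * ω)) * (M * (3 * HnormSq ω g + HnormSq ω ud)))
          ≤ c * (mr ^ (-(2 * ω)) * (M * (4 * T ^ 2))) := by
            refine mul_le_mul_of_nonneg_left ?_ hcpos.le
            refine mul_le_mul_of_nonneg_left ?_ (Real.rpow_nonneg hmrpos.le _)
            exact mul_le_mul_of_nonneg_left hH4 hMpos.le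
        _ = (4 * c * M * T) * (mr ^ (-ω)) * (mr ^ (-ω) * T) := by rw [hsplit]; ring
        _ ≤ (4 * c * M * T) * (mr ^ (-ω)) * (1 * T) := by
            refine mul_le_mul_of_nonneg_left ?_ (mul_nonneg hCnn hexpnn)
            exact mul_le_mul_of_nonneg_right hexp1 hTnn
        _ = (4 * c * M * T) * mr ^ (-ω) * T := by ring
        _ ≤ (4 * c * M * T + 1) * mr ^ (-ω) * T :=
            mul_le_mul_of_nonneg_right
              (mul_le_mul_of_nonneg_right (by linarith) hexpnn) hTnn
    -- conclude
    have hlast : ‖v‖ ≤ (4 * c * M * T + 1) / κ * mr ^ (-ω) * T := by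
      rw [div_mul_eq_mul_div, div_mul_eq_mul_div, le_div_iff₀ hκ]
      calc ‖v‖ * κ = κ * ‖v‖ := by ring
        _ ≤ c * (mr ^ (-(2 * ω)) * (M * (3 * HnormSq ω g + HnormSq ω ud))) := hdiv
        _ ≤ (4 * c * M * T + 1) * mr ^ (-ω) * T := hfinal
    rw [hnr]
    exact hlast
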